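/- Fix a positive integer k and let P′ be the lattice triangle in ℝ² with vertices (0,0), (−(2k+3), 0), and (−3(2k+1), 4(2k+1)). Then the number of lattice points of ℤ² in P′ equals 8k² + 18k + 11, which equals C(4(k+1)+1, 2) + 1. -/

import Mathlib

lemma hull_char (c : ℝ) (hc : 1 ≤ c) :
    convexHull ℝ ({(0, 0), (-(c+2), 0), (-(3*c), 4*c)} : Set (ℝ × ℝ)) =
      {p : ℝ × ℝ | 0 ≤ p.2 ∧ 4*p.1 + 3*p.2 ≤ 0 ∧
        0 ≤ 4*c*p.1 + 2*(c-1)*p.2 + 4*c*(c+2)} := by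
  have hc0 : (0:ℝ) < c := by linarith
  have hcne : c ≠ 0 := ne_of_gt hc0
  have hc2 : c + 2 ≠ 0 := by positivity
  apply le_antisymm
  · apply convexHull_min
    · rintro p (rfl | rfl | rfl) <;> constructor <;> try constructor
      all_goals simp only
      all_goals nlinarith [hc0]
    · intro p hp q hq a b ha hb hab
      obtain ⟨hp1, hp2, hp3⟩ := hp
      obtain ⟨hq1, hq2, hq3⟩ := hq
      have h4 : (a+b)*(4*c*(c+2)) = 4*c*(c+2) := by rw [hab]; ring
      refine ⟨?_, ?_, ?_⟩ <;>
        simp only [Prod.smul_fst, Prod.smul_snd, Prod.fst_add, Prod.snd_add,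
          smul_eq_mul]
      · nlinarith [mul_nonneg ha hp1, mul_nonneg hb hq1]
      · nlinarith [mul_nonneg ha (neg_nonneg.2 hp2), mul_nonneg hb (neg_nonneg.2 hq2)]
      · nlinarith [mul_nonneg ha hp3, mul_nonneg hb hq3, h4]
  · intro p hp
    obtain ⟨h1, h2, h3⟩ := hp
    set aa : ℝ := (4*c*p.1 + 2*(c-1)*p.2 + 4*c*(c+2)) / (4*c*(c+2)) with haa
    set bb : ℝ := -(4*p.1 + 3*p.2) / (4*(c+2)) with hbb
    set cc : ℝ := p.2 / (4*c) with hcc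
    have key := (convex_convexHull ℝ ({(0, 0), (-(c+2), 0), (-(3*c), 4*c)} : Set (ℝ × ℝ))).sum_mem
      (t := Finset.univ) (w := ![aa, bb, cc])
      (z := ![(0,0), (-(c+2), 0), (-(3*c), 4*c)])
      (by
        intro i _
        fin_cases i
        · exact div_nonneg h3 (by positivity)
        · exact div_nonneg (by linarith) (by positivity)
        · exact div_nonneg h1 (by positivity))
      (by
        rw [Fin.sum_univ_three]
        show aa + bb + cc = 1
        rw [haa, hbb, hcc]
        field_simp
        ring)
      (by
        intro i _
        fin_cases i
        · exact subset_convexHull ℝ _ (by simp)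
        · exact subset_convexHull ℝ _ (by simp)
        · exact subset_convexHull ℝ _ (by simp))
    rw [Fin.sum_univ_three] at key
    simp only [Matrix.cons_val_zero, Matrix.cons_val_one, Matrix.head_cons,
      Matrix.cons_val_two, Matrix.tail_cons] at key
    have hsum : aa • ((0:ℝ), (0:ℝ)) + bb • (-(c+2), (0:ℝ)) + cc • (-(3*c), 4*c) = p := by
      have hp' : p = (p.1, p.2) := rfl
      rw [hp']
      simp only [Prod.smul_mk, smul_eq_mul, Prod.mk_add_mk, Prod.mk.injEq]
      rw [haa, hbb, hcc]
      constructor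
      · field_simp
        ring
      · field_simp
        ring
    rwa [hsum] at key


lemma aux_sum (M : ℕ) :
    ∑ t ∈ Finset.Icc (-(2*(M:ℤ))) 0, (t/2 + 1 - (3*t+1)/2).toNat
      = 2*M^2 + 2*M + 1 := by
  induction M with
  | zero => decide
  | succ n ih =>
    have h1 : Finset.Icc (-(2*((n+1:ℕ):ℤ))) 0
        = insert (-(2*(n:ℤ)+2)) (insert (-(2*(n:ℤ)+1)) (Finset.Icc (-(2*(n:ℤ))) 0)) := by
      ext x
      simp only [Finset.mem_Icc, Finset.mem_insert]
      push_cast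
      omega
    rw [h1, Finset.sum_insert (by simp only [Finset.mem_insert, Finset.mem_Icc]; omega),
      Finset.sum_insert (by simp only [Finset.mem_Icc]; omega), ih]
    have e1 : ((-(2*(n:ℤ)+2))/2 + 1 - (3*(-(2*(n:ℤ)+2))+1)/2).toNat = 2*n+3 := by omega
    have e2 : ((-(2*(n:ℤ)+1))/2 + 1 - (3*(-(2*(n:ℤ)+1))+1)/2).toNat = 2*n+1 := by omega
    rw [e1, e2]
    ring


theorem stmt_17 (k : ℕ) (hk : 0 < k) :
    Set.ncard {v : ℤ × ℤ |
        ((v.1 : ℝ), (v.2 : ℝ)) ∈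
          convexHull ℝ ({(0, 0), (-((2 * k + 3 : ℕ) : ℝ), 0),
            (-(3 * (2 * k + 1 : ℕ) : ℝ), (4 * (2 * k + 1 : ℕ) : ℝ))} : Set (ℝ × ℝ))} =
      8 * k ^ 2 + 18 * k + 11 ∧
    8 * k ^ 2 + 18 * k + 11 = Nat.choose (4 * (k + 1) + 1) 2 + 1 := by
  set K : ℤ := (k : ℤ) with hK
  have hK1 : 1 ≤ K := by rw [hK]; omega
  set m : ℤ := 2*K + 1 with hm
  have hm3 : 3 ≤ m := by omega
  set c : ℝ := 2*(k:ℝ) + 1 with hc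
  have hc1 : (1:ℝ) ≤ c := by
    rw [hc]
    have : (0:ℝ) ≤ (k:ℝ) := Nat.cast_nonneg k
    linarith
  set F : Finset (ℤ × ℤ) :=
    ((Finset.Icc (-(3*m)) 0) ×ˢ (Finset.Icc 0 (4*m))).filter
      (fun p => 0 ≤ p.2 ∧ 4*p.1 + 3*p.2 ≤ 0 ∧
        0 ≤ 4*m*p.1 + 2*(m-1)*p.2 + 4*m*(m+2)) with hF
  constructor
  · -- main count
    have h1 : ({(0, 0), (-((2 * k + 3 : ℕ) : ℝ), 0),
            (-(3 * (2 * k + 1 : ℕ) : ℝ), (4 * (2 * k + 1 : ℕ) : ℝ))} : Set (ℝ × ℝ))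
        = {(0, 0), (-(c+2), 0), (-(3*c), 4*c)} := by
      rw [show (-((2 * k + 3 : ℕ) : ℝ)) = -(c+2) by rw [hc]; push_cast; ring,
        show (-(3 * (2 * k + 1 : ℕ) : ℝ)) = -(3*c) by rw [hc]; push_cast; ring,
        show ((4 * (2 * k + 1 : ℕ) : ℝ)) = 4*c by rw [hc]; push_cast; ring]
    have hmain : {v : ℤ × ℤ |
        ((v.1 : ℝ), (v.2 : ℝ)) ∈
          convexHull ℝ ({(0, 0), (-((2 * k + 3 : ℕ) : ℝ), 0),
            (-(3 * (2 * k + 1 : ℕ) : ℝ), (4 * (2 * k + 1 : ℕ) : ℝ))} : Set (ℝ × ℝ))} = ↑F := by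
      rw [h1, hull_char c hc1]
      ext ⟨x, y⟩
      have hcast : ((0:ℝ) ≤ (y:ℝ) ∧ 4*(x:ℝ) + 3*(y:ℝ) ≤ 0 ∧
          0 ≤ 4*c*(x:ℝ) + 2*(c-1)*(y:ℝ) + 4*c*(c+2)) ↔
          (0 ≤ y ∧ 4*x + 3*y ≤ 0 ∧ 0 ≤ 4*m*x + 2*(m-1)*y + 4*m*(m+2)) := by
        rw [hc, hm, hK]
        push_cast
        constructor <;> rintro ⟨a1, a2, a3⟩ <;>
          exact ⟨by exact_mod_cast a1, by exact_mod_cast a2, by exact_mod_cast a3⟩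
      simp only [Set.mem_setOf_eq, hF, Finset.coe_filter, Finset.mem_product, Finset.mem_Icc]
      rw [hcast]
      constructor
      · rintro ⟨a1, a2, a3⟩
        have hy4 : y ≤ 4*m := by
          nlinarith [mul_le_mul_of_nonneg_left a2 (show (0:ℤ) ≤ 2*m by omega), a3, hm3]
        refine ⟨⟨⟨?_, ?_⟩, a1, hy4⟩, a1, a2, a3⟩
        · nlinarith [a3, mul_le_mul_of_nonneg_left hy4 (show (0:ℤ) ≤ 2*(m-1) by omega), hm3]
        · linarith
      · rintro ⟨-, a1, a2, a3⟩
        exact ⟨a1, a2, a3⟩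
    rw [hmain, Set.ncard_coe_finset]
    -- fiberwise count over t = 2x + y
    have hfib : ∀ p ∈ F, 2*p.1 + p.2 ∈ Finset.Icc (-(2*(m+2))) 0 := by
      rintro ⟨x, y⟩ hp
      simp only [hF, Finset.mem_filter, Finset.mem_product, Finset.mem_Icc] at hp ⊢
      obtain ⟨-, a1, a2, a3⟩ := hp
      constructor
      · nlinarith [a1, a3, hm3]
      · linarith
    rw [Finset.card_eq_sum_card_fiberwise hfib]
    -- each fiber is an interval
    have hfibcard : ∀ t ∈ Finset.Icc (-(2*(m+2))) 0,
        (F.filter (fun p => 2*p.1 + p.2 = t)).card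
          = (t/2 + 1 - max (-(m*(m+2)) - K*t) ((3*t+1)/2)).toNat := by
      intro t ht
      simp only [Finset.mem_Icc] at ht
      have himg : F.filter (fun p => 2*p.1 + p.2 = t)
          = (Finset.Icc (max (-(m*(m+2)) - K*t) ((3*t+1)/2)) (t/2)).image
              (fun x => (x, t - 2*x)) := by
        ext ⟨x, y⟩
        simp only [hF, Finset.mem_filter, Finset.mem_product, Finset.mem_Icc,
          Finset.mem_image, Prod.mk.injEq]
        constructor
        · rintro ⟨⟨⟨⟨b1, b2⟩, b3, b4⟩, a1, a2, a3⟩, ht'⟩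
          refine ⟨x, ⟨?_, ?_⟩, rfl, by omega⟩
          · have key : 4*m*x + 2*(m-1)*y + 4*m*(m+2) = 4*(x + K*(2*x+y) + m*(m+2)) := by
              rw [hm]; ring
            rw [key, ht'] at a3
            apply max_le
            · linarith
            · omega
          · omega
        · rintro ⟨x', ⟨c1, c2⟩, rfl, rfl⟩
          have hc1' : -(m*(m+2)) - K*t ≤ x' := le_trans (le_max_left _ _) c1
          have hc2' : (3*t+1)/2 ≤ x' := le_trans (le_max_right _ _) c1
          have key : 4*m*x' + 2*(m-1)*(t - 2*x') + 4*m*(m+2) = 4*(x' + K*t + m*(m+2)) := by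
            rw [hm]; ring
          have hxlow : -(3*m) ≤ x' := by
            rcases le_or_gt (-(2*m)) t with h | h
            · omega
            · have e : -(m*(m+2)) - K*t = -3*m - K*(t+2*m) := by rw [hm]; ring
              have : K*(t+2*m) ≤ 0 :=
                mul_nonpos_of_nonneg_of_nonpos (by omega) (by omega)
              linarith
          have hyhigh : t - 2*x' ≤ 4*m := by
            rcases le_or_gt (-(2*m)) t with h | h
            · omega
            · have e2 : t + 2*(m*(m+2)) + 2*(K*t) = m*t + 2*m*(m+2) := by
                rw [hm]; ring
              have hmt : m*t ≤ m*(-(2*m)) :=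
                mul_le_mul_of_nonneg_left (le_of_lt h) (by omega)
              nlinarith [hc1']
          refine ⟨⟨⟨⟨hxlow, by omega⟩, by omega, hyhigh⟩, by omega, by omega, ?_⟩, by ring⟩
          rw [key]
          linarith
      rw [himg, Finset.card_image_of_injective _ (fun a b h => by
        simpa using congrArg Prod.fst h), Int.card_Icc]
    rw [Finset.sum_congr rfl hfibcard]
    -- split the range
    have hsplit : Finset.Icc (-(2*(m+2))) 0
        = Finset.Icc (-(2*m+4)) (-(2*m+1)) ∪ Finset.Icc (-(2*m)) 0 := by
      ext t; simp only [Finset.mem_Icc, Finset.mem_union]; omega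
    have hdisj : Disjoint (Finset.Icc (-(2*m+4)) (-(2*m+1))) (Finset.Icc (-(2*m)) 0) := by
      rw [Finset.disjoint_left]
      intro t ht ht'
      simp only [Finset.mem_Icc] at ht ht'
      omega
    rw [hsplit, Finset.sum_union hdisj]
    -- main part: t in [-2m, 0]
    have hmainsum : ∑ t ∈ Finset.Icc (-(2*m)) 0,
        (t/2 + 1 - max (-(m*(m+2)) - K*t) ((3*t+1)/2)).toNat
        = 8*k^2 + 12*k + 5 := by
      have hcong : ∀ t ∈ Finset.Icc (-(2*m)) 0,
          (t/2 + 1 - max (-(m*(m+2)) - K*t) ((3*t+1)/2)).toNat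
            = (t/2 + 1 - (3*t+1)/2).toNat := by
        intro t ht
        simp only [Finset.mem_Icc] at ht
        have hle : -(m*(m+2)) - K*t ≤ (3*t+1)/2 := by
          have e : 3*t+1 - (-2*(m*(m+2)) - 2*(K*t)) = (2*K+3)*(t+2*m) + 1 := by
            rw [hm]; ring
          have h0 : 0 ≤ (2*K+3)*(t+2*m) := mul_nonneg (by omega) (by omega)
          have h2c : 2*(-(m*(m+2)) - K*t) ≤ 3*t + 1 - 1 := by linarith
          have hgoal : ∀ C : ℤ, 2*C ≤ 3*t → C ≤ (3*t+1)/2 := fun C h => by omega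
          exact hgoal _ (by linarith)
        rw [max_eq_right hle]
      rw [Finset.sum_congr rfl hcong]
      have haux := aux_sum (2*k+1)
      have hrange : Finset.Icc (-(2*((2*k+1:ℕ):ℤ))) 0 = Finset.Icc (-(2*m)) 0 := by
        have he : (((2*k+1:ℕ):ℤ)) = m := by omega
        rw [he]
      rw [hrange] at haux
      rw [haux]
      ring
    rw [hmainsum]
    -- boundary part: 4 explicit terms
    have hmaxL : ∀ t : ℤ, -(2*m+4) ≤ t → t ≤ -(2*m+1) →
        max (-(m*(m+2)) - K*t) ((3*t+1)/2) = -(m*(m+2)) - K*t := by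
      intro t h1' h2'
      apply max_eq_left
      have e : 2*(-(m*(m+2)) - K*t) - 3*t = -((2*K+3)*(t+2*m)) := by rw [hm]; ring
      have h0 : (2*K+3)*(t+2*m) ≤ 0 :=
        mul_nonpos_of_nonneg_of_nonpos (by omega) (by omega)
      have hgoal : ∀ C : ℤ, 3*t ≤ 2*C → (3*t+1)/2 ≤ C := fun C h => by omega
      exact hgoal _ (by linarith)
    have hbset : Finset.Icc (-(2*m+4)) (-(2*m+1))
        = {-(2*m+4), -(2*m+3), -(2*m+2), -(2*m+1)} := by
      ext t; simp only [Finset.mem_Icc, Finset.mem_insert, Finset.mem_singleton]; omega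
    rw [hbset]
    rw [Finset.sum_insert (by simp only [Finset.mem_insert, Finset.mem_singleton]; omega),
      Finset.sum_insert (by simp only [Finset.mem_insert, Finset.mem_singleton]; omega),
      Finset.sum_insert (by simp only [Finset.mem_singleton]; omega),
      Finset.sum_singleton]
    rw [hmaxL (-(2*m+4)) (by omega) (by omega), hmaxL (-(2*m+3)) (by omega) (by omega),
      hmaxL (-(2*m+2)) (by omega) (by omega), hmaxL (-(2*m+1)) (by omega) (by omega)]
    have v1 : ((-(2*m+4))/2 + 1 - (-(m*(m+2)) - K*(-(2*m+4)))).toNat = 1 := by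
      rw [show (-(2*m+4))/2 = -m-2 by omega,
        show (-m-2 + 1 - (-(m*(m+2)) - K*(-(2*m+4)))) = 1 by rw [hm]; ring]
      rfl
    have v2 : ((-(2*m+3))/2 + 1 - (-(m*(m+2)) - K*(-(2*m+3)))).toNat = k+1 := by
      rw [show (-(2*m+3))/2 = -m-2 by omega,
        show (-m-2 + 1 - (-(m*(m+2)) - K*(-(2*m+3)))) = K+1 by rw [hm]; ring, hK]
      omega
    have v3 : ((-(2*m+2))/2 + 1 - (-(m*(m+2)) - K*(-(2*m+2)))).toNat = 2*k+2 := by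
      rw [show (-(2*m+2))/2 = -m-1 by omega,
        show (-m-1 + 1 - (-(m*(m+2)) - K*(-(2*m+2)))) = 2*K+2 by rw [hm]; ring, hK]
      omega
    have v4 : ((-(2*m+1))/2 + 1 - (-(m*(m+2)) - K*(-(2*m+1)))).toNat = 3*k+2 := by
      rw [show (-(2*m+1))/2 = -m-1 by omega,
        show (-m-1 + 1 - (-(m*(m+2)) - K*(-(2*m+1)))) = 3*K+2 by rw [hm]; ring, hK]
      omega
    rw [v1, v2, v3, v4]
    ring
  · -- choose identity
    rw [Nat.choose_two_right]
    have h2 : (4 * (k + 1) + 1) * (4 * (k + 1) + 1 - 1) = 2 * (8*k^2 + 18*k + 10) := by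
      rw [Nat.add_sub_cancel]; ring
    rw [h2, Nat.mul_div_cancel_left _ (by norm_num : 0 < 2)]
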